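/- arXiv:1309.5885 — 3 statements merged into one kernel-verified Lean document; each statement's English description precedes it below -/
import Mathlib

section
/- Let $\hat{S}$ be a $\tau$-nice sampling on $[n]$ with $n\ge 2$. Then for any nonempty $J\subseteq[n]$, $\max_{1\le k\le n}\mathbf{E}\left[|J\cap\hat{S}|\cdot\chi_{(k\in\hat{S})}\right] = \frac{\tau}{n}\left(1+\frac{(|J|-1)(\tau-1)}{n-1}\right)$, where $\chi_{(k\in\hat{S})}$ equals $1$ if $k\in\hat{S}$ and $0$ otherwise. -/
open Finset

lemma count_subsets {α : Type*} [Fintype α] [DecidableEq α] (τ : ℕ) (A : Finset α)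
    (h : A.card ≤ τ) :
    (Finset.univ.filter (fun S : Finset α => S.card = τ ∧ A ⊆ S)).card
      = (Fintype.card α - A.card).choose (τ - A.card) := by
  rw [← Finset.card_compl A, ← Finset.card_powersetCard]
  apply Finset.card_bij' (fun S _ => S \ A) (fun T _ => T ∪ A)
  · intro S hS
    simp only [mem_filter, mem_univ, true_and] at hS
    rw [mem_powersetCard]
    constructor
    · intro x hx
      simp only [mem_sdiff] at hx
      simpa using hx.2
    · rw [card_sdiff_of_subset hS.2, hS.1]
  · intro T hT
    rw [mem_powersetCard] at hT
    have hdisj : Disjoint T A := by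
      intro x hx1 hx2 y hy
      exact absurd (hx2 hy) (by simpa using hT.1 (hx1 hy))
    simp only [mem_filter, mem_univ, true_and]
    refine ⟨?_, subset_union_right⟩
    rw [card_union_of_disjoint hdisj, hT.2]
    omega
  · intro S hS
    simp only [mem_filter, mem_univ, true_and] at hS
    exact sdiff_union_of_subset hS.2
  · intro T hT
    rw [mem_powersetCard] at hT
    apply union_sdiff_cancel_right
    intro x hx1 hx2 y hy
    exact absurd (hx2 hy) (by simpa using hT.1 (hx1 hy))

lemma pair_count (n τ : ℕ) (hτ1 : 1 ≤ τ) (j k : Fin n) :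
    (Finset.univ.filter (fun S : Finset (Fin n) => S.card = τ ∧ j ∈ S ∧ k ∈ S)).card
      = if j = k then (n-1).choose (τ-1)
        else (if 2 ≤ τ then (n-2).choose (τ-2) else 0) := by
  by_cases hjk : j = k
  · subst hjk
    simp only [if_pos rfl]
    have := count_subsets (α := Fin n) τ {j} (by simpa using hτ1)
    simp only [card_singleton, Fintype.card_fin, singleton_subset_iff] at this
    rw [← this]
    congr 1
    ext S
    simp [and_self]
  · rw [if_neg hjk]
    by_cases h2 : 2 ≤ τ
    · rw [if_pos h2]
      have hcard : ({j, k} : Finset (Fin n)).card = 2 := by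
        rw [card_insert_of_notMem (by simpa using hjk), card_singleton]
      have := count_subsets (α := Fin n) τ {j, k} (by rw [hcard]; exact h2)
      simp only [hcard, Fintype.card_fin] at this
      rw [← this]
      congr 1
      ext S
      simp [insert_subset_iff]
    · rw [if_neg h2]
      rw [Finset.card_eq_zero, Finset.filter_eq_empty_iff]
      intro S _
      rintro ⟨hc, hj, hk⟩
      have hsub : ({j, k} : Finset (Fin n)) ⊆ S := by simp [insert_subset_iff, hj, hk]
      have h2' := Finset.card_le_card hsub
      rw [card_insert_of_notMem (by simpa using hjk), card_singleton, hc] at h2'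
      omega

lemma sum_swap_count (n τ : ℕ) (J : Finset (Fin n)) (k : Fin n) :
    (∑ S ∈ Finset.univ.filter (fun S : Finset (Fin n) => S.card = τ),
      (J ∩ S).card * (if k ∈ S then 1 else 0))
    = ∑ j ∈ J, (Finset.univ.filter
        (fun S : Finset (Fin n) => S.card = τ ∧ j ∈ S ∧ k ∈ S)).card := by
  have hc : ∀ S : Finset (Fin n), (J ∩ S).card = ∑ j ∈ J, if j ∈ S then 1 else 0 := by
    intro S
    rw [← Finset.filter_mem_eq_inter, Finset.card_filter]
  simp_rw [hc, Finset.sum_mul, mul_ite, mul_one, mul_zero, ← ite_and]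
  rw [Finset.sum_comm]
  refine Finset.sum_congr rfl fun j _ => ?_
  rw [← Finset.card_filter, Finset.filter_filter]
  congr 1
  ext S
  simp only [mem_filter]
  tauto

theorem stmt4 (n τ : ℕ) (hn : 2 ≤ n) (hτ1 : 1 ≤ τ) (hτn : τ ≤ n)
    (J : Finset (Fin n)) (hJ : J.Nonempty) :
    IsGreatest (Set.range fun k : Fin n =>
      (∑ S ∈ Finset.univ.filter (fun S : Finset (Fin n) => S.card = τ),
        ((J ∩ S).card : ℝ) * (if k ∈ S then (1 : ℝ) else 0)) / (n.choose τ : ℝ))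
      (((τ : ℝ) / (n : ℝ)) *
        (1 + ((J.card : ℝ) - 1) * ((τ : ℝ) - 1) / ((n : ℝ) - 1))) := by
  set r1 : ℕ := (n-1).choose (τ-1) with hr1
  set P : ℕ := if 2 ≤ τ then (n-2).choose (τ-2) else 0 with hP
  set Cn : ℕ := n.choose τ with hCn
  -- key nat identities
  have h1 : n * r1 = τ * Cn := by
    rw [hr1, hCn]
    obtain ⟨m, rfl⟩ : ∃ m, n = m + 2 := ⟨n - 2, by omega⟩
    obtain ⟨t, rfl⟩ : ∃ t, τ = t + 1 := ⟨τ - 1, by omega⟩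
    show (m+2) * (m+1).choose t = (t+1) * (m+2).choose (t+1)
    rw [show (m+2) = Nat.succ (m+1) from rfl, Nat.add_one_mul_choose_eq, mul_comm]
  have h2 : n * (n-1) * P = τ * (τ-1) * Cn := by
    rw [hP, hCn]
    obtain ⟨m, rfl⟩ : ∃ m, n = m + 2 := ⟨n - 2, by omega⟩
    rcases Nat.lt_or_ge τ 2 with h2 | h2
    · interval_cases τ <;> simp
    · obtain ⟨s, rfl⟩ : ∃ s, τ = s + 2 := ⟨τ - 2, by omega⟩
      rw [if_pos h2]
      show (m+2) * (m+1) * m.choose s = (s+2) * (s+1) * (m+2).choose (s+2)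
      have a := Nat.add_one_mul_choose_eq m s
      have b := Nat.add_one_mul_choose_eq (m+1) (s+1)
      calc (m+2) * (m+1) * m.choose s = (m+2) * ((m+1) * m.choose s) := by ring
        _ = (m+2) * ((m+1).choose (s+1) * (s+1)) := by rw [a]
        _ = ((m+2) * (m+1).choose (s+1)) * (s+1) := by ring
        _ = ((m+2).choose (s+2) * (s+2)) * (s+1) := by rw [b]
        _ = (s+2) * (s+1) * (m+2).choose (s+2) := by ring
  have hPle : P ≤ r1 := by
    rw [hP, hr1]
    rcases Nat.lt_or_ge τ 2 with h2 | h2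
    · simp [Nat.not_le.2 h2]
    · rw [if_pos h2]
      obtain ⟨m, rfl⟩ : ∃ m, n = m + 2 := ⟨n - 2, by omega⟩
      obtain ⟨s, rfl⟩ : ∃ s, τ = s + 2 := ⟨τ - 2, by omega⟩
      show m.choose s ≤ (m+1).choose (s+1)
      rw [Nat.choose_succ_succ]
      exact Nat.le_add_right _ _
  have hm1 : 1 ≤ J.card := Finset.card_pos.2 hJ
  -- evaluate the numerator as a natural number
  have hN : ∀ k : Fin n,
      (∑ S ∈ Finset.univ.filter (fun S : Finset (Fin n) => S.card = τ),
        (J ∩ S).card * (if k ∈ S then 1 else 0))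
      = if k ∈ J then r1 + (J.card - 1) * P else J.card * P := by
    intro k
    rw [sum_swap_count n τ J k]
    have : ∀ j ∈ J, (Finset.univ.filter
        (fun S : Finset (Fin n) => S.card = τ ∧ j ∈ S ∧ k ∈ S)).card
        = if j = k then r1 else P := fun j _ => pair_count n τ hτ1 j k
    rw [Finset.sum_congr rfl this]
    by_cases hk : k ∈ J
    · rw [if_pos hk, ← Finset.add_sum_erase _ _ hk, if_pos rfl]
      congr 1
      rw [Finset.sum_congr rfl (fun j hj => if_neg (Finset.ne_of_mem_erase hj)),
        Finset.sum_const, Finset.card_erase_of_mem hk, smul_eq_mul]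
    · rw [if_neg hk]
      rw [Finset.sum_congr rfl (fun j hj => if_neg (by rintro rfl; exact hk hj)),
        Finset.sum_const, smul_eq_mul]
  -- cast facts
  have hn0 : (n : ℝ) ≠ 0 := by positivity
  have hn1 : (n : ℝ) - 1 ≠ 0 := by
    have : (2 : ℝ) ≤ n := by exact_mod_cast hn
    linarith
  have hCpos : 0 < Cn := Nat.choose_pos hτn
  have hC0 : (Cn : ℝ) ≠ 0 := Nat.cast_ne_zero.2 hCpos.ne'
  have h1R : (n : ℝ) * r1 = τ * Cn := by exact_mod_cast h1
  have h2R : (n : ℝ) * ((n : ℝ) - 1) * P = τ * ((τ : ℝ) - 1) * Cn := by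
    have := congrArg (Nat.cast : ℕ → ℝ) h2
    push_cast [Nat.cast_sub (by omega : 1 ≤ n), Nat.cast_sub hτ1] at this
    convert this using 2 <;> ring
  -- the main value identity
  have hmain : ((r1 : ℝ) + ((J.card : ℝ) - 1) * P) / Cn
      = ((τ : ℝ) / (n : ℝ)) * (1 + ((J.card : ℝ) - 1) * ((τ : ℝ) - 1) / ((n : ℝ) - 1)) := by
    field_simp
    ring_nf
    nlinarith [h1R, h2R, sq_nonneg ((n:ℝ) - 1)]
  constructor
  · obtain ⟨k0, hk0⟩ := hJ
    refine ⟨k0, ?_⟩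
    have := hN k0
    push_cast at this ⊢
    rw [show (∑ S ∈ Finset.univ.filter (fun S : Finset (Fin n) => S.card = τ),
        ((J ∩ S).card : ℝ) * (if k0 ∈ S then (1 : ℝ) else 0))
      = ((∑ S ∈ Finset.univ.filter (fun S : Finset (Fin n) => S.card = τ),
        (J ∩ S).card * (if k0 ∈ S then 1 else 0) : ℕ) : ℝ) by push_cast; rfl]
    rw [hN k0, if_pos hk0, ← hmain]
    push_cast [Nat.cast_sub hm1]
    ring_nf
  · rintro x ⟨k, rfl⟩
    simp only
    rw [show (∑ S ∈ Finset.univ.filter (fun S : Finset (Fin n) => S.card = τ),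
        ((J ∩ S).card : ℝ) * (if k ∈ S then (1 : ℝ) else 0))
      = ((∑ S ∈ Finset.univ.filter (fun S : Finset (Fin n) => S.card = τ),
        (J ∩ S).card * (if k ∈ S then 1 else 0) : ℕ) : ℝ) by push_cast; rfl]
    rw [← hmain, hN k]
    have hle : (if k ∈ J then r1 + (J.card - 1) * P else J.card * P)
        ≤ r1 + (J.card - 1) * P := by
      split
      · exact le_rfl
      · have hJP : J.card * P = P + (J.card - 1) * P := by
          obtain ⟨c, hc⟩ := Nat.exists_eq_succ_of_ne_zero (by omega : J.card ≠ 0)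
          rw [hc, Nat.succ_sub_one, Nat.succ_mul, Nat.add_comm]
        rw [hJP]
        exact Nat.add_le_add_right hPle _
    have hcast : ((if k ∈ J then r1 + (J.card - 1) * P else J.card * P : ℕ) : ℝ)
        ≤ (r1 : ℝ) + ((J.card : ℝ) - 1) * (P : ℝ) := by
      calc ((if k ∈ J then r1 + (J.card - 1) * P else J.card * P : ℕ) : ℝ)
          ≤ ((r1 + (J.card - 1) * P : ℕ) : ℝ) := Nat.cast_le.2 hle
        _ = (r1 : ℝ) + ((J.card : ℝ) - 1) * (P : ℝ) := by
            push_cast [Nat.cast_sub hm1]; ring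
    gcongr
end

section
/- Let $\hat{S}$ be a proper uniform sampling on $[n]$ and $\phi:\mathbb{R}^N\to\mathbb{R}$ be continuously differentiable. Fix $x\in\mathbb{R}^N$ and define $\hat{\phi}_x(h)=\mathbf{E}[\phi(x+h_{[\hat{S}]})]$. Then $\nabla\hat{\phi}_x(0)=\frac{\mathbf{E}[|\hat{S}|]}{n}\nabla\phi(x)$. -/
open Finset

theorem stmt13 (N n : ℕ) (hn : 0 < n) (blk : Fin N → Fin n)
    (p : Finset (Fin n) → ℝ) (hp : ∀ S, 0 ≤ p S)
    (hsum : ∑ S : Finset (Fin n), p S = 1)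
    (hunif : ∀ i j : Fin n,
      (∑ S : Finset (Fin n), if i ∈ S then p S else 0) =
      (∑ S : Finset (Fin n), if j ∈ S then p S else 0))
    (hproper : 0 < ∑ S ∈ Finset.univ.filter (fun S : Finset (Fin n) => S.Nonempty), p S)
    (φ : (Fin N → ℝ) → ℝ) (hφ : ContDiff ℝ 1 φ)
    (x : Fin N → ℝ) :
    fderiv ℝ (fun h : Fin N → ℝ =>
      ∑ S : Finset (Fin n), p S * φ (x + fun j => if blk j ∈ S then h j else 0)) 0 =
    ((∑ S : Finset (Fin n), p S * S.card) / n) • fderiv ℝ φ x := by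
  classical
  set f := fderiv ℝ φ x with hf
  -- the masking linear maps
  set L : Finset (Fin n) → (Fin N → ℝ) →L[ℝ] (Fin N → ℝ) := fun S =>
    ContinuousLinearMap.pi (fun j => if blk j ∈ S then ContinuousLinearMap.proj j else 0)
    with hL
  have hLapp : ∀ S (h : Fin N → ℝ), L S h = fun j => if blk j ∈ S then h j else 0 := by
    intro S h
    funext j
    simp only [hL, ContinuousLinearMap.pi_apply]
    by_cases hj : blk j ∈ S <;> simp [hj]
  -- compute the derivative
  have hder : HasFDerivAt (fun h : Fin N → ℝ =>
      ∑ S : Finset (Fin n), p S * φ (x + fun j => if blk j ∈ S then h j else 0))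
      (∑ S : Finset (Fin n), p S • (f.comp (L S))) 0 := by
    apply HasFDerivAt.fun_sum
    intro S _
    have h1 : HasFDerivAt (fun h : Fin N → ℝ => x + L S h) (L S) 0 :=
      ((L S).hasFDerivAt).const_add x
    have h2 : HasFDerivAt φ f (x + L S 0) := by
      have : x + L S 0 = x := by simp
      rw [this, hf]
      exact ((hφ.differentiable one_ne_zero) x).hasFDerivAt
    have h3 := (h2.comp 0 h1).const_mul (p S)
    have heq : (fun h : Fin N → ℝ => p S * φ (x + L S h)) =
        (fun h : Fin N → ℝ => p S * φ (x + fun j => if blk j ∈ S then h j else 0)) := by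
      funext h; rw [hLapp]
    simp only [Function.comp_def] at h3
    rw [heq] at h3
    exact h3
  rw [hder.fderiv]
  -- uniform probability of each block
  set i0 : Fin n := ⟨0, hn⟩
  set q : ℝ := ∑ S : Finset (Fin n), if i0 ∈ S then p S else 0 with hq
  have hqi : ∀ i : Fin n, (∑ S : Finset (Fin n), if i ∈ S then p S else 0) = q :=
    fun i => hunif i i0
  -- expected cardinality equals n * q
  have hcard : (∑ S : Finset (Fin n), p S * S.card) = n * q := by
    have : ∀ S : Finset (Fin n), p S * S.card = ∑ i : Fin n, if i ∈ S then p S else 0 := by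
      intro S
      rw [Finset.sum_ite_mem, Finset.univ_inter, Finset.sum_const, nsmul_eq_mul, mul_comm]
    rw [Finset.sum_congr rfl (fun S _ => this S), Finset.sum_comm]
    simp [hqi, Finset.sum_const, mul_comm]
  have hn' : (n : ℝ) ≠ 0 := Nat.cast_ne_zero.mpr hn.ne'
  have hqdiv : (∑ S : Finset (Fin n), p S * S.card) / n = q := by
    rw [hcard, mul_comm, mul_div_assoc, div_self hn', mul_one]
  rw [hqdiv]
  -- equality of the linear maps
  ext h
  simp only [ContinuousLinearMap.coe_sum', Finset.sum_apply, ContinuousLinearMap.coe_smul',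
    Pi.smul_apply, ContinuousLinearMap.coe_comp', Function.comp_apply, smul_eq_mul]
  have hfsum : ∀ v : Fin N → ℝ,
      f v = ∑ j : Fin N, v j * f (fun k => if j = k then 1 else 0) := by
    intro v
    have := (f.toLinearMap).pi_apply_eq_sum_univ v
    simpa using this
  calc ∑ S : Finset (Fin n), p S * f (L S h)
      = ∑ S : Finset (Fin n), ∑ j : Fin N,
          (if blk j ∈ S then p S else 0) * (h j * f (fun k => if j = k then 1 else 0)) := by
        refine Finset.sum_congr rfl fun S _ => ?_
        rw [hfsum (L S h), Finset.mul_sum]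
        refine Finset.sum_congr rfl fun j _ => ?_
        rw [hLapp]
        by_cases hj : blk j ∈ S
        · simp only [hj, if_true]; try ring
        · simp [hj]
    _ = ∑ j : Fin N, (∑ S : Finset (Fin n), if blk j ∈ S then p S else 0) *
          (h j * f (fun k => if j = k then 1 else 0)) := by
        rw [Finset.sum_comm]
        simp [Finset.sum_mul]
    _ = q * f h := by
        rw [hfsum h, Finset.mul_sum]
        exact Finset.sum_congr rfl fun j _ => by rw [hqi (blk j)]; try ring
end

section
/- Let $A\in\mathbb{R}^{m\times n}$ (all blocks of size one, $B_i=1$), let $p=2$, $v_j>0$ for all $j$, so $\|z\|_v^2=\sum_j v_j^2 z_j^2$ and $(\|z\|_v^*)^2=\sum_j v_j^{-2}z_j^2$ on $\mathbb{R}^m$. Define $w_i^*=\sum_{j=1}^m v_j^{-2}A_{ji}^2$ (assumed positive for all $i$). Then for every nonempty $S\subseteq[n]$, $\max\left\{\sum_{j=1}^m v_j^{-2}\left(\sum_{i\in S}A_{ji}h_i\right)^2 : \sum_{i\in S}w_i^* h_i^2 = 1\right\} \le \max_{1\le j\le m}|\{i\in S: A_{ji}\ne 0\}|$. -/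
open Finset

open Classical in
theorem stmt18 (m n : ℕ) (A : Matrix (Fin m) (Fin n) ℝ)
    (v : Fin m → ℝ) (hv : ∀ j, 0 < v j)
    (w : Fin n → ℝ) (hw : ∀ i, w i = ∑ j, (v j)⁻¹ ^ 2 * (A j i) ^ 2)
    (hwpos : ∀ i, 0 < w i)
    (S : Finset (Fin n)) (hS : S.Nonempty)
    (h : Fin n → ℝ) (hh : ∑ i ∈ S, w i * (h i) ^ 2 = 1) :
    (∑ j, (v j)⁻¹ ^ 2 * (∑ i ∈ S, A j i * h i) ^ 2) ≤
      ((Finset.univ.sup fun j : Fin m =>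
        (S.filter fun i => A j i ≠ 0).card : ℕ) : ℝ) := by
  set K : ℕ := Finset.univ.sup fun j : Fin m => (S.filter fun i => A j i ≠ 0).card with hK
  have key : ∀ j : Fin m, (∑ i ∈ S, A j i * h i) ^ 2 ≤
      (K : ℝ) * ∑ i ∈ S, (A j i) ^ 2 * (h i) ^ 2 := by
    intro j
    have hfilt : ∑ i ∈ S, A j i * h i =
        ∑ i ∈ S.filter (fun i => A j i ≠ 0), A j i * h i := by
      refine (Finset.sum_filter_of_ne ?_).symm
      intro i _ hne
      intro hA; exact hne (by simp [hA])
    rw [hfilt]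
    calc (∑ i ∈ S.filter (fun i => A j i ≠ 0), A j i * h i) ^ 2
        ≤ (S.filter (fun i => A j i ≠ 0)).card *
            ∑ i ∈ S.filter (fun i => A j i ≠ 0), (A j i * h i) ^ 2 :=
          sq_sum_le_card_mul_sum_sq
      _ ≤ (K : ℝ) * ∑ i ∈ S, (A j i) ^ 2 * (h i) ^ 2 := by
          apply mul_le_mul
          · exact_mod_cast Finset.le_sup (f := fun j : Fin m =>
              (S.filter fun i => A j i ≠ 0).card) (Finset.mem_univ j)
          · refine le_trans (le_of_eq ?_) (Finset.sum_le_sum_of_subset_of_nonneg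
              (Finset.filter_subset (fun i => A j i ≠ 0) S) (fun i _ _ => by positivity))
            exact Finset.sum_congr rfl fun i _ => by ring
          · positivity
          · positivity
  calc ∑ j, (v j)⁻¹ ^ 2 * (∑ i ∈ S, A j i * h i) ^ 2
      ≤ ∑ j, (v j)⁻¹ ^ 2 * ((K : ℝ) * ∑ i ∈ S, (A j i) ^ 2 * (h i) ^ 2) := by
        refine Finset.sum_le_sum fun j _ => ?_
        exact mul_le_mul_of_nonneg_left (key j) (by positivity)
    _ = (K : ℝ) * ∑ i ∈ S, w i * (h i) ^ 2 := by
        simp only [hw, Finset.mul_sum, Finset.sum_mul]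
        rw [Finset.sum_comm]
        exact Finset.sum_congr rfl fun i _ => Finset.sum_congr rfl fun j _ => by ring
    _ = (K : ℝ) := by rw [hh, mul_one]
end
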